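/- Let b ≥ 2 be an integer and let M = { b^j · a_i : 1 ≤ i ≤ n, j ≥ 1 } ⊆ A_n. For every integer k ≥ 1, the element w_k = (b^k − 1)(a_1 + ⋯ + a_n) satisfies |w_k|_G = n(b^k − 1) and |w_k|_{G'} = n(b−1)k; that is, the minimum number of elements of G' summing to w_k is exactly n(b−1)k. -/

import Mathlib

open scoped ENNReal BigOperators

/-- The length of an element of the free abelian monoid `A_n = ℕ^n` with respect to the
standard generators `G = {a_1, …, a_n}`: the sum of its coordinates. -/
def glen {n : ℕ} (w : Fin n → ℕ) : ℕ := ∑ j, w j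

/-- The standard generating set `G` of `A_n = ℕ^n`: the standard basis vectors. -/
def gens (n : ℕ) : Set (Fin n → ℕ) := {w | ∃ i : Fin n, w = fun t => if t = i then 1 else 0}

/-- The length of `w` with respect to a generating set `S`: the minimum number of elements
of `S` (with repetition) summing to `w`; `⊤` if `w` is not representable. -/
noncomputable def slen {n : ℕ} (S : Set (Fin n → ℕ)) (w : Fin n → ℕ) : ℕ∞ :=
  sInf {k : ℕ∞ | ∃ l : Multiset (Fin n → ℕ), (∀ x ∈ l, x ∈ S) ∧ l.sum = w ∧ (l.card : ℕ∞) = k}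

/-- The expansion function `f_{G'}(s) = sup { r ∈ ℕ : B_G(r) ⊆ B_{G'}(s) }`, valued in
`ℝ≥0∞` (so that `⊤` means the ball inclusion holds for every radius `r`). -/
noncomputable def expansion {n : ℕ} (S : Set (Fin n → ℕ)) (s : ℕ) : ℝ≥0∞ :=
  sSup {x : ℝ≥0∞ | ∃ r : ℕ, x = (r : ℝ≥0∞) ∧ ∀ w : Fin n → ℕ, glen w ≤ r → slen S w ≤ (s : ℕ∞)}

lemma geom_nat (b : ℕ) (hb : 1 ≤ b) : ∀ k : ℕ, ∑ j ∈ Finset.range k, (b - 1) * b ^ j = b ^ k - 1 := by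
  intro k
  induction k with
  | zero => simp
  | succ k ih =>
    rw [Finset.sum_range_succ, ih]
    have h1 : 1 ≤ b ^ k := Nat.one_le_pow _ _ (by omega)
    have h2 : (b - 1) * b ^ k = b * b ^ k - b ^ k := by
      rw [Nat.sub_mul, one_mul]
    rw [pow_succ, h2, mul_comm (b ^ k) b]
    have h3 : b ^ k ≤ b * b ^ k := Nat.le_mul_of_pos_left _ (by omega)
    omega

lemma multiset_sum_apply' {n : ℕ} (l : Multiset (Fin n → ℕ)) (i : Fin n) :
    l.sum i = (l.map (fun x => x i)).sum := by
  induction l using Multiset.induction_on with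
  | empty => simp
  | cons a s ih => simp [ih]

lemma countP_eq_sum_map {α : Type*} (l : Multiset α) (p : α → Prop) [DecidablePred p] :
    l.countP p = (l.map (fun x => if p x then 1 else 0)).sum := by
  induction l using Multiset.induction_on with
  | empty => simp
  | cons a s ih =>
    by_cases h : p a <;> simp [Multiset.countP_cons, h, ih, Nat.add_comm]

lemma sum_map_interchange {α : Type*} {n : ℕ} (l : Multiset α) (f : Fin n → α → ℕ) :
    ∑ i, (l.map (f i)).sum = (l.map fun x => ∑ i, f i x).sum := by
  induction l using Multiset.induction_on with
  | empty => simp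
  | cons a s ih => simp [Finset.sum_add_distrib, ih]

lemma mul_sum_div (b : ℕ) (hb : 0 < b) :
    ∀ (w : Multiset ℕ), (∀ x ∈ w, b ∣ x) → b * (w.map (· / b)).sum = w.sum := by
  intro w
  induction w using Multiset.induction_on with
  | empty => simp
  | cons a s ihs =>
    intro h
    have ha : b ∣ a := h a (Multiset.mem_cons_self a s)
    have hs := ihs (fun x hx => h x (Multiset.mem_cons_of_mem hx))
    simp only [Multiset.map_cons, Multiset.sum_cons, Nat.mul_add, hs,
      Nat.mul_div_cancel' ha]

lemma pow_rep_card (b : ℕ) (hb : 2 ≤ b) :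
    ∀ m k (v : Multiset ℕ), v.card = m →
      (∀ x ∈ v, ∃ e, x = b ^ e) → v.sum = b ^ k - 1 → (b - 1) * k ≤ m := by
  intro m
  induction m using Nat.strong_induction_on with
  | _ m ih =>
    intro k v hcard hpow hsum
    rcases Nat.eq_zero_or_pos k with rfl | hk
    · simp
    obtain ⟨k', rfl⟩ : ∃ k', k = k' + 1 := ⟨k - 1, by omega⟩
    have hb1 : 1 ≤ b - 1 := by omega
    by_cases hc : b ≤ v.count 1
    · -- merge b ones into a single b
      have hle : Multiset.replicate b 1 ≤ v := by
        rw [Multiset.le_iff_count]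
        intro a
        rcases eq_or_ne a 1 with rfl | ha
        · simpa using hc
        · simp [Multiset.count_replicate, ha.symm]
      obtain ⟨w, hw⟩ := Multiset.le_iff_exists_add.mp hle
      have hcw : w.card = m - b := by
        have := hcard
        rw [hw, Multiset.card_add, Multiset.card_replicate] at this
        omega
      have hm : b ≤ m := by
        have := Multiset.card_le_card hle
        rw [hcard, Multiset.card_replicate] at this; exact this
      have hsum' : (b ::ₘ w).sum = b ^ (k' + 1) - 1 := by
        rw [hw, Multiset.sum_add, Multiset.sum_replicate, smul_eq_mul, mul_one] at hsum
        rw [Multiset.sum_cons]; exact hsum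
      have hpow' : ∀ x ∈ (b ::ₘ w), ∃ e, x = b ^ e := by
        intro x hx
        rcases Multiset.mem_cons.mp hx with h | hx'
        · exact ⟨1, by rw [h, pow_one]⟩
        · exact hpow x (by rw [hw]; exact Multiset.mem_add.mpr (Or.inr hx'))
      have hcard' : (b ::ₘ w).card = m - b + 1 := by
        rw [Multiset.card_cons, hcw]
      have := ih (m - b + 1) (by omega) (k' + 1) _ hcard' hpow' hsum'
      omega
    · -- count of ones is < b; it must be exactly b - 1
      push_neg at hc
      set c := v.count 1 with hcdef
      have hsplit : v.sum = (v.filter (· = 1)).sum + (v.filter (¬ · = 1)).sum :=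
        (Multiset.sum_filter_add_sum_filter_not (s := v) (· = 1)).symm
      have hfe : v.filter (· = 1) = Multiset.replicate c 1 := by
        rw [hcdef]; exact Multiset.filter_eq' v 1
      set w := v.filter (¬ · = 1) with hwdef
      have hws : v.sum = c + w.sum := by
        rw [hsplit, hfe, Multiset.sum_replicate, smul_eq_mul, mul_one]
      have hpw : ∀ x ∈ w, ∃ e, 1 ≤ e ∧ x = b ^ e := by
        intro x hx
        have hx1 : ¬ x = 1 := by
          have := Multiset.of_mem_filter hx
          simpa using this
        obtain ⟨e, he⟩ := hpow x (Multiset.mem_of_mem_filter hx)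
        rcases Nat.eq_zero_or_pos e with rfl | he1
        · simp at he; exact absurd he hx1
        · exact ⟨e, he1, he⟩
      have hdvd : b ∣ w.sum := by
        apply Multiset.dvd_sum
        intro x hx
        obtain ⟨e, he1, rfl⟩ := hpw x hx
        exact dvd_pow_self b (by omega)
      obtain ⟨N, hN⟩ := hdvd
      have hbk : 1 ≤ b ^ (k' + 1) := Nat.one_le_pow _ _ (by omega)
      have hpows : b ^ (k' + 1) = b * b ^ k' := by rw [pow_succ'];
      have hbk1 : 1 ≤ b ^ k' := Nat.one_le_pow _ _ (by omega)
      -- c = b - 1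
      have hsum2 : c + b * N = b * b ^ k' - 1 := by
        rw [hws, hN, hpows] at hsum; exact hsum
      have hc1 : c = b - 1 := by
        have h1 : c + 1 + b * N = b * b ^ k' := by
          have : 0 < b * b ^ k' := Nat.mul_pos (by omega) hbk1
          omega
        have hMB : N ≤ b ^ k' - 1 := by
          by_contra h
          push_neg at h
          have h2 : b ^ k' ≤ N := by omega
          have := Nat.mul_le_mul_left b h2
          omega
        obtain ⟨d, hd⟩ : ∃ d, b ^ k' = N + d := ⟨b ^ k' - N, by omega⟩
        rw [hd, Nat.mul_add] at h1
        have hcd : c + 1 = b * d := by omega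
        have hdpos : 0 < d := by
          rcases Nat.eq_zero_or_pos d with rfl | h
          · rw [mul_zero] at hcd; omega
          · exact h
        have hble : b * d ≤ b * 1 := by rw [mul_one]; omega
        have : d ≤ 1 := Nat.le_of_mul_le_mul_left hble (by omega)
        have hd1 : d = 1 := by omega
        rw [hd1, mul_one] at hcd
        omega
      -- divide through by b
      have hsumw : w.sum = b * (b ^ k' - 1) := by
        rw [Nat.mul_sub, mul_one]
        omega
      set w' := w.map (· / b) with hw'def
      have hdvdall : ∀ x ∈ w, b ∣ x := by
        intro x hx
        obtain ⟨e, he1, rfl⟩ := hpw x hx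
        exact dvd_pow_self b (by omega)
      have hsum' : w'.sum = b ^ k' - 1 := by
        have h2 := mul_sum_div b (by omega) w hdvdall
        rw [hsumw] at h2
        exact Nat.eq_of_mul_eq_mul_left (by omega) h2
      have hpow' : ∀ y ∈ w', ∃ e, y = b ^ e := by
        intro y hy
        obtain ⟨x, hx, rfl⟩ := Multiset.mem_map.mp hy
        obtain ⟨e, he1, rfl⟩ := hpw x hx
        refine ⟨e - 1, ?_⟩
        obtain ⟨e', rfl⟩ : ∃ e', e = e' + 1 := ⟨e - 1, by omega⟩
        rw [pow_succ', Nat.mul_div_cancel_left _ (by omega : 0 < b)]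
        simp
      have hcardw : c + w.card = m := by
        have h := Multiset.filter_add_not (fun x => x = 1) v
        have := congrArg Multiset.card h
        rw [Multiset.card_add, hfe, Multiset.card_replicate] at this
        rw [← hwdef] at this
        omega
      have hcard' : w'.card = m - (b - 1) := by
        rw [hw'def, Multiset.card_map]
        omega
      have hmlt : m - (b - 1) < m := by omega
      have := ih (m - (b - 1)) hmlt k' w' hcard' hpow' hsum'
      have hexp : (b - 1) * (k' + 1) = (b - 1) * k' + (b - 1) := by ring
      omega

/-- **A hard-to-compress element.**
For the place-notation macro set `M = { b^j · a_i : 1 ≤ i ≤ n, j ≥ 1 }` and any `k ≥ 1`,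
the element `w_k = (b^k - 1)(a_1 + ⋯ + a_n)` (i.e. the constant vector with all
coordinates `b^k - 1`) satisfies `|w_k|_G = n(b^k - 1)` and `|w_k|_{G'} = n(b-1)k`. -/
theorem hard_element_exact_length
    (n b : ℕ) (hn : 1 ≤ n) (hb : 2 ≤ b)
    (M : Set (Fin n → ℕ))
    (hM : M = {w | ∃ i : Fin n, ∃ j : ℕ, 1 ≤ j ∧ w = fun t => if t = i then b ^ j else 0}) :
    ∀ k : ℕ, 1 ≤ k →
      glen (fun _ : Fin n => b ^ k - 1) = n * (b ^ k - 1) ∧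
      slen (gens n ∪ M) (fun _ : Fin n => b ^ k - 1) = ((n * (b - 1) * k : ℕ) : ℕ∞) := by
  intro k hk
  constructor
  · simp [glen, Finset.sum_const, Finset.card_univ]
  · have hstruct : ∀ x ∈ gens n ∪ M, ∃ i : Fin n, ∃ e : ℕ,
        x = fun t => if t = i then b ^ e else 0 := by
      intro x hx
      rcases hx with hx | hx
      · obtain ⟨i, rfl⟩ := hx; exact ⟨i, 0, by funext t; simp⟩
      · rw [hM] at hx; obtain ⟨i, j, hj, rfl⟩ := hx; exact ⟨i, j, rfl⟩
    rw [slen]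
    apply le_antisymm
    · -- upper bound: explicit representation
      apply sInf_le
      set L : Multiset (Fin n → ℕ) := (Finset.univ ×ˢ Finset.range k).val.bind
        (fun p => Multiset.replicate (b - 1)
          (fun t => if t = p.1 then b ^ p.2 else 0)) with hLdef
      refine ⟨L, ?_, ?_, ?_⟩
      · intro x hx
        rw [hLdef, Multiset.mem_bind] at hx
        obtain ⟨p, hp, hxp⟩ := hx
        have hx' := Multiset.eq_of_mem_replicate hxp
        rcases Nat.eq_zero_or_pos p.2 with h0 | h1
        · left
          refine ⟨p.1, ?_⟩
          rw [hx', h0]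
          funext t; simp
        · right
          rw [hM]
          exact ⟨p.1, p.2, h1, hx'⟩
      · -- sum
        rw [hLdef, Multiset.sum_bind]
        have : ((Finset.univ ×ˢ Finset.range k).val.map
            (fun p => (Multiset.replicate (b - 1)
              ((fun t => if t = p.1 then b ^ p.2 else 0) : Fin n → ℕ)).sum)).sum
            = ∑ p ∈ Finset.univ ×ˢ Finset.range k,
                (b - 1) • (fun t => if t = p.1 then b ^ p.2 else 0 : Fin n → ℕ) := by
          rw [Finset.sum]
          apply congrArg
          apply Multiset.map_congr rfl
          intro p _
          rw [Multiset.sum_replicate]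
        rw [this]
        funext t
        rw [Finset.sum_apply]
        have h2 : ∀ p ∈ Finset.univ ×ˢ Finset.range k,
            ((b - 1) • (fun t => if t = p.1 then b ^ p.2 else 0 : Fin n → ℕ)) t
              = if t = p.1 then (b - 1) * b ^ p.2 else 0 := by
          intro p _
          simp [Pi.smul_apply, mul_ite]
        rw [Finset.sum_congr rfl h2, Finset.sum_product]
        have h4 : ∀ i : Fin n, (∑ j ∈ Finset.range k, if t = i then (b - 1) * b ^ j else 0)
            = if t = i then b ^ k - 1 else 0 := by
          intro i
          by_cases hti : t = i
          · simp only [hti, if_true]; exact geom_nat b (by omega) k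
          · simp [hti]
        rw [Finset.sum_congr rfl (fun i _ => h4 i),
          Finset.sum_ite_eq Finset.univ t (fun _ => b ^ k - 1)]
        simp
      · -- card
        have hcard : L.card = n * (b - 1) * k := by
          rw [hLdef, Multiset.card_bind]
          simp only [Function.comp_def, Multiset.card_replicate]
          rw [Multiset.map_const', Multiset.sum_replicate, smul_eq_mul]
          have hcv : ((Finset.univ : Finset (Fin n)) ×ˢ Finset.range k).val.card = n * k := by
            simp [Finset.card_val]
          rw [hcv]; ring
        exact_mod_cast hcard
    · -- lower bound
      apply le_sInf
      rintro y ⟨l, hmem, hsum, rfl⟩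
      rw [Nat.cast_le]
      have hco : ∀ i : Fin n, (b - 1) * k ≤ l.countP (fun x => x i ≠ 0) := by
        intro i
        set v := (l.filter (fun x => x i ≠ 0)).map (fun x => x i) with hvdef
        have hvcard : v.card = l.countP (fun x => x i ≠ 0) := by
          rw [hvdef, Multiset.card_map, ← Multiset.countP_eq_card_filter]
        have hvpow : ∀ y ∈ v, ∃ e, y = b ^ e := by
          intro y hy
          obtain ⟨x, hx, rfl⟩ := Multiset.mem_map.mp hy
          have hxne : x i ≠ 0 := (Multiset.mem_filter.mp hx).2
          obtain ⟨i', e, rfl⟩ := hstruct x (hmem x (Multiset.mem_filter.mp hx).1)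
          by_cases hii : i = i'
          · exact ⟨e, by simp [hii]⟩
          · exfalso; apply hxne; simp [hii]
        have hvsum : v.sum = b ^ k - 1 := by
          have h1 : (l.map (fun x => x i)).sum = b ^ k - 1 := by
            rw [← multiset_sum_apply', hsum]
          have h2 : l = l.filter (fun x => x i ≠ 0) + l.filter (fun x => ¬ x i ≠ 0) :=
            (Multiset.filter_add_not _ _).symm
          rw [h2, Multiset.map_add, Multiset.sum_add] at h1
          have h3 : ((l.filter (fun x => ¬ x i ≠ 0)).map (fun x => x i)).sum = 0 := by
            apply Multiset.sum_eq_zero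
            intro z hz
            obtain ⟨x, hx, rfl⟩ := Multiset.mem_map.mp hz
            have := (Multiset.mem_filter.mp hx).2
            simpa using this
          rw [h3, add_zero] at h1
          exact h1
        calc (b - 1) * k ≤ v.card := pow_rep_card b hb v.card k v rfl hvpow hvsum
          _ = _ := hvcard
      have hsumc : ∑ i, l.countP (fun x => x i ≠ 0) = l.card := by
        have h1 : ∀ i : Fin n, l.countP (fun x => x i ≠ 0)
            = (l.map (fun x => if x i ≠ 0 then 1 else 0)).sum :=
          fun i => countP_eq_sum_map l _
        rw [Finset.sum_congr rfl (fun i _ => h1 i),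
          sum_map_interchange l (fun i x => if x i ≠ 0 then 1 else 0)]
        have h2 : l.map (fun x => ∑ i, if x i ≠ 0 then 1 else 0)
            = l.map (fun _ => 1) := by
          apply Multiset.map_congr rfl
          intro x hx
          obtain ⟨i', e, rfl⟩ := hstruct x (hmem x hx)
          have h3 : ∀ i : Fin n, (if (fun t => if t = i' then b ^ e else 0) i ≠ 0 then 1 else 0)
              = if i = i' then 1 else 0 := by
            intro i
            have hbe : b ^ e ≠ 0 := by positivity
            by_cases hii : i = i' <;> simp [hii, hbe] <;> intro h0 <;> omega
          rw [Finset.sum_congr rfl (fun i _ => h3 i), Finset.sum_ite_eq' Finset.univ i'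
            (fun _ => 1)]
          simp
        rw [h2, Multiset.map_const', Multiset.sum_replicate, smul_eq_mul, mul_one]
      calc n * (b - 1) * k = ∑ _i : Fin n, (b - 1) * k := by
            simp [Finset.sum_const, Finset.card_univ]; ring
        _ ≤ ∑ i, l.countP (fun x => x i ≠ 0) := Finset.sum_le_sum (fun i _ => hco i)
        _ = l.card := hsumc
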